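/- Let A be a commutative ℚ-algebra with a derivation δ, extended coefficientwise to A[[t]], and let ev : A[[t]] → A be evaluation at 0. Then T^{ev}_{δ + d/dt} is a differential ring homomorphism from (A[[t]], δ + d/dt) to (A[[t]], d/dt), i.e., T^{ev}_{δ + d/dt} ∘ (δ + d/dt) = (d/dt) ∘ T^{ev}_{δ + d/dt}. -/

import Mathlib

/-- The coefficientwise extension of a map `δ : A → A` to `A[[t]]`. -/
noncomputable def coeffwiseDer {A : Type*} [CommRing A] (δ : A → A) :
    PowerSeries A → PowerSeries A :=
  fun f => PowerSeries.mk fun n => δ (PowerSeries.coeff n f)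

/-- The Taylor map `T^{ev}_D(f) = Σ_k ev(D^k f)/k! · t^k` of the evaluation map
`ev : A[[t]] → A` at `0`, for a map `D` on `A[[t]]`. -/
noncomputable def taylorEv {A : Type*} [CommRing A] [Algebra ℚ A]
    (D : PowerSeries A → PowerSeries A) : PowerSeries A → PowerSeries A :=
  fun f => PowerSeries.mk fun k =>
    (k.factorial : ℚ)⁻¹ • PowerSeries.constantCoeff (D^[k] f)

/-- `T^{ev}_{δ + d/dt}` is a differential ring homomorphism
`(A[[t]], δ + d/dt) → (A[[t]], d/dt)`. -/
theorem taylorEv_is_differential {A : Type*} [CommRing A] [Algebra ℚ A]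
    (δ : Derivation ℤ A A) :
    ∀ f : PowerSeries A,
      taylorEv (fun g => coeffwiseDer (⇑δ) g + PowerSeries.derivativeFun g)
          (coeffwiseDer (⇑δ) f + PowerSeries.derivativeFun f) =
        PowerSeries.derivativeFun
          (taylorEv (fun g => coeffwiseDer (⇑δ) g + PowerSeries.derivativeFun g) f) := by
  intro f
  set D := fun g => coeffwiseDer (⇑δ) g + PowerSeries.derivativeFun g with hD
  ext k
  show _ = PowerSeries.coeff k (PowerSeries.derivative A (taylorEv D f))
  rw [PowerSeries.coeff_derivative]
  simp only [taylorEv, PowerSeries.coeff_mk, ← Function.iterate_succ_apply]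
  set c := (PowerSeries.constantCoeff) (D^[k + 1] f) with hc
  rw [smul_mul_assoc]
  have h2 : c * ((k : A) + 1) = (((k : ℚ) + 1)) • c := by
    rw [Algebra.smul_def, mul_comm]
    norm_num
  rw [h2, ← smul_assoc]
  congr 1
  rw [smul_eq_mul, Nat.factorial_succ]
  push_cast
  have hk : (k : ℚ) + 1 ≠ 0 := by positivity
  field_simp
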